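/- The symmetric matrix H̄ = I - (s y^T + y s^T)/(s^T y) + t̄·(s s^T)/(s^T y), where t̄ = τ + ‖y‖²/(s^T y), has determinant equal to τ‖s‖²/(s^T y) times the product of its n-2 unit eigenvalues; more precisely its two nontrivial eigenvalues λ_min, λ_max satisfy λ_min·λ_max = τ‖s‖²/(s^T y) and λ_min + λ_max = ‖y‖²‖s‖²/(s^T y)² + τ‖s‖²/(s^T y), all other eigenvalues equal 1. -/

import Mathlib

open Matrix

/-- the symmetrized matrix `H̄` has `n - 2` unit eigenvalues and two
nontrivial eigenvalues `λ₁, λ₂` with `λ₁λ₂ = τ‖s‖²/(sᵀy)` and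
`λ₁ + λ₂ = ‖y‖²‖s‖²/(sᵀy)² + τ‖s‖²/(sᵀy)`; in particular
`det H̄ = τ‖s‖²/(sᵀy) · 1^(n-2)`. -/
theorem stmt_4 {n : ℕ} (hn : 2 ≤ n) (s y : Fin n → ℝ) (τ : ℝ)
    (hsy : 0 < s ⬝ᵥ y) (hτ : 0 < τ)
    (hind : LinearIndependent ℝ ![s, y]) :
    let tbar : ℝ := τ + (y ⬝ᵥ y) / (s ⬝ᵥ y)
    let Hbar : Matrix (Fin n) (Fin n) ℝ :=
      1 - (s ⬝ᵥ y)⁻¹ • (vecMulVec s y + vecMulVec y s) +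
        ((s ⬝ᵥ y)⁻¹ * tbar) • vecMulVec s s
    Hbar.det = τ * (s ⬝ᵥ s) / (s ⬝ᵥ y) * 1 ^ (n - 2) ∧
      ∃ lmin lmax : ℝ,
        lmin * lmax = τ * (s ⬝ᵥ s) / (s ⬝ᵥ y) ∧
        lmin + lmax = (y ⬝ᵥ y) * (s ⬝ᵥ s) / (s ⬝ᵥ y) ^ 2 + τ * (s ⬝ᵥ s) / (s ⬝ᵥ y) ∧
        lmin ∈ spectrum ℝ Hbar ∧ lmax ∈ spectrum ℝ Hbar ∧
        spectrum ℝ Hbar ⊆ {lmin, lmax, 1} := by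
  intro tbar Hbar
  have hH : Hbar = 1 - (s ⬝ᵥ y)⁻¹ • (vecMulVec s y + vecMulVec y s) +
      ((s ⬝ᵥ y)⁻¹ * (τ + (y ⬝ᵥ y) / (s ⬝ᵥ y))) • vecMulVec s s := rfl
  have hQ : (s ⬝ᵥ y) ≠ 0 := ne_of_gt hsy
  have hs0 : s ≠ 0 := by simpa using hind.ne_zero 0
  have hy0 : y ≠ 0 := by simpa using hind.ne_zero 1
  have hPnn : 0 ≤ s ⬝ᵥ s := Finset.sum_nonneg fun i _ => mul_self_nonneg _
  have hP : 0 < s ⬝ᵥ s :=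
    hPnn.lt_of_ne fun h => hs0 (dotProduct_self_eq_zero.mp h.symm)
  have hP0 : (s ⬝ᵥ s) ≠ 0 := ne_of_gt hP
  have hCS : (s ⬝ᵥ y) * (s ⬝ᵥ y) ≤ (s ⬝ᵥ s) * (y ⬝ᵥ y) := by
    have h := Finset.sum_mul_sq_le_sq_mul_sq Finset.univ s y
    simp only [pow_two] at h
    simpa [dotProduct] using h
  -- linear independence in coordinates
  have hli : ∀ a b : ℝ, a • s + b • y = 0 → a = 0 ∧ b = 0 := by
    intro a b hab
    have h := Fintype.linearIndependent_iff.mp hind ![a, b] (by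
      simpa [Fin.sum_univ_two] using hab)
    exact ⟨h 0, h 1⟩
  -- mulVec of rank-one matrices
  have hvmv : ∀ u w v : Fin n → ℝ, vecMulVec u w *ᵥ v = (w ⬝ᵥ v) • u := by
    intro u w v
    funext i
    simp only [mulVec, dotProduct, vecMulVec_apply, Pi.smul_apply, smul_eq_mul]
    rw [Finset.sum_mul]
    exact Finset.sum_congr rfl fun j _ => by ring
  -- action of Hbar
  have hmul : ∀ v : Fin n → ℝ, Hbar *ᵥ v =
      v + ((s ⬝ᵥ y)⁻¹ * (τ + (y ⬝ᵥ y) / (s ⬝ᵥ y)) * (s ⬝ᵥ v) - (s ⬝ᵥ y)⁻¹ * (y ⬝ᵥ v)) • s +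
        (-((s ⬝ᵥ y)⁻¹ * (s ⬝ᵥ v))) • y := by
    intro v
    rw [hH]
    simp only [add_mulVec, sub_mulVec, smul_mulVec, one_mulVec, hvmv]
    funext i
    simp only [Pi.add_apply, Pi.sub_apply, Pi.smul_apply, Pi.neg_apply, smul_eq_mul]
    ring
  -- dot products with combinations
  have hdots : ∀ x z : ℝ, s ⬝ᵥ (x • s + z • y) = x * (s ⬝ᵥ s) + z * (s ⬝ᵥ y) := by
    intro x z
    simp [dotProduct_add, dotProduct_smul, smul_eq_mul]
  have hdoty : ∀ x z : ℝ, y ⬝ᵥ (x • s + z • y) = x * (s ⬝ᵥ y) + z * (y ⬝ᵥ y) := by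
    intro x z
    simp [dotProduct_add, dotProduct_smul, smul_eq_mul, dotProduct_comm y s]
  -- the two nontrivial eigenvalues
  obtain ⟨S, hSdef⟩ : ∃ S : ℝ, S = (y ⬝ᵥ y) * (s ⬝ᵥ s) / (s ⬝ᵥ y) ^ 2 + τ * (s ⬝ᵥ s) / (s ⬝ᵥ y) :=
    ⟨_, rfl⟩
  obtain ⟨D, hDdef⟩ : ∃ D : ℝ, D = τ * (s ⬝ᵥ s) / (s ⬝ᵥ y) := ⟨_, rfl⟩
  have hdisc : 0 ≤ S ^ 2 - 4 * D := by
    have key : S ^ 2 - 4 * D =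
        (((y ⬝ᵥ y) * (s ⬝ᵥ s) + τ * (s ⬝ᵥ s) * (s ⬝ᵥ y)) ^ 2
          - 4 * (τ * (s ⬝ᵥ s) * (s ⬝ᵥ y) ^ 3)) / (s ⬝ᵥ y) ^ 4 := by
      rw [hSdef, hDdef]; field_simp
    rw [key]
    apply div_nonneg _ (by positivity)
    nlinarith [sq_nonneg ((y ⬝ᵥ y) * (s ⬝ᵥ s) - τ * (s ⬝ᵥ s) * (s ⬝ᵥ y)),
      mul_nonneg (le_of_lt (mul_pos (mul_pos hτ hP) hsy))
        (sub_nonneg.mpr hCS)]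
  set lmin : ℝ := (S - Real.sqrt (S ^ 2 - 4 * D)) / 2 with hlmin
  set lmax : ℝ := (S + Real.sqrt (S ^ 2 - 4 * D)) / 2 with hlmax
  have hsum : lmin + lmax = S := by rw [hlmin, hlmax]; ring
  have hsq : Real.sqrt (S ^ 2 - 4 * D) ^ 2 = S ^ 2 - 4 * D := Real.sq_sqrt hdisc
  have hprod : lmin * lmax = D := by
    have h : lmin * lmax = (S ^ 2 - Real.sqrt (S ^ 2 - 4 * D) ^ 2) / 4 := by
      rw [hlmin, hlmax]; ring
    rw [h, hsq]; ring
  have hfact : ∀ r : ℝ, (r - lmin) * (r - lmax) = r ^ 2 - S * r + D := by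
    intro r
    linear_combination (-r) * hsum + hprod
  -- spectrum characterization
  have hspec : ∀ r : ℝ, r ∈ spectrum ℝ Hbar ↔ ∃ v, v ≠ 0 ∧ Hbar *ᵥ v = r • v := by
    intro r
    have halg : ∀ v : Fin n → ℝ,
        (algebraMap ℝ (Matrix (Fin n) (Fin n) ℝ) r - Hbar) *ᵥ v = r • v - Hbar *ᵥ v := by
      intro v
      rw [sub_mulVec, Algebra.algebraMap_eq_smul_one, smul_mulVec, one_mulVec]
    rw [spectrum.mem_iff, Matrix.isUnit_iff_isUnit_det, isUnit_iff_ne_zero, not_not,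
      ← Matrix.exists_mulVec_eq_zero_iff]
    constructor
    · rintro ⟨v, hv0, hv⟩
      rw [halg] at hv
      exact ⟨v, hv0, (sub_eq_zero.mp hv).symm⟩
    · rintro ⟨v, hv0, hv⟩
      exact ⟨v, hv0, by rw [halg, hv, sub_self]⟩
  -- roots of the quadratic are eigenvalues
  have heigen : ∀ r : ℝ, r ^ 2 - S * r + D = 0 → r ∈ spectrum ℝ Hbar := by
    intro r hr
    rw [hspec]
    refine ⟨r • s + (-((s ⬝ᵥ y)⁻¹ * (s ⬝ᵥ s))) • y, ?_, ?_⟩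
    · intro h0
      have h2 := (hli _ _ h0).2
      exact (mul_ne_zero (inv_ne_zero hQ) hP0) (neg_eq_zero.mp h2)
    · rw [hmul, hdots, hdoty]
      match_scalars
      · rw [hSdef, hDdef] at hr
        field_simp
        field_simp at hr
        linear_combination (-1 : ℝ) * hr
      · field_simp
        ring
  have hlminS : lmin ∈ spectrum ℝ Hbar := by
    refine heigen lmin ?_
    linear_combination -hfact lmin
  have hlmaxS : lmax ∈ spectrum ℝ Hbar := by
    refine heigen lmax ?_
    linear_combination -hfact lmax
  -- every eigenvalue is lmin, lmax or 1
  have hsub : spectrum ℝ Hbar ⊆ {lmin, lmax, 1} := by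
    intro μ hμ
    by_cases hone : μ = 1
    · simp [hone]
    obtain ⟨v, hv0, hv⟩ := (hspec μ).mp hμ
    have hμ1 : μ - 1 ≠ 0 := sub_ne_zero.mpr hone
    obtain ⟨x, z, hvxz⟩ : ∃ x z : ℝ, v = x • s + z • y := by
      have h := (hmul v).symm.trans hv
      have h1 : (μ - 1) • v =
          ((s ⬝ᵥ y)⁻¹ * (τ + (y ⬝ᵥ y) / (s ⬝ᵥ y)) * (s ⬝ᵥ v) - (s ⬝ᵥ y)⁻¹ * (y ⬝ᵥ v)) • s +
            (-((s ⬝ᵥ y)⁻¹ * (s ⬝ᵥ v))) • y := by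
        linear_combination (norm := module) (-1 : ℝ) • h
      refine ⟨(μ - 1)⁻¹ * ((s ⬝ᵥ y)⁻¹ * (τ + (y ⬝ᵥ y) / (s ⬝ᵥ y)) * (s ⬝ᵥ v) - (s ⬝ᵥ y)⁻¹ * (y ⬝ᵥ v)),
        (μ - 1)⁻¹ * (-((s ⬝ᵥ y)⁻¹ * (s ⬝ᵥ v))), ?_⟩
      calc v = (μ - 1)⁻¹ • ((μ - 1) • v) := by
              rw [smul_smul, inv_mul_cancel₀ hμ1, one_smul]
        _ = _ := by rw [h1, smul_add, smul_smul, smul_smul]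
    have h' := hmul v
    rw [hv, hvxz, hdots, hdoty] at h'
    have h0 : (x + ((s ⬝ᵥ y)⁻¹ * (τ + (y ⬝ᵥ y) / (s ⬝ᵥ y)) * (x * (s ⬝ᵥ s) + z * (s ⬝ᵥ y))
          - (s ⬝ᵥ y)⁻¹ * (x * (s ⬝ᵥ y) + z * (y ⬝ᵥ y))) - μ * x) • s +
        ((z + (-((s ⬝ᵥ y)⁻¹ * (x * (s ⬝ᵥ s) + z * (s ⬝ᵥ y)))) - μ * z)) • y = 0 := by
      linear_combination (norm := module) (-1 : ℝ) • h'
    obtain ⟨he1, he2⟩ := hli _ _ h0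
    have hz : z ≠ 0 := by
      intro hz0
      rw [hz0] at he2
      have hx0 : x = 0 := by
        field_simp at he2
        exact (mul_eq_zero.mp (by linear_combination -he2 : x * (s ⬝ᵥ s) = 0)).resolve_right hP0
      apply hv0
      rw [hvxz, hx0, hz0]
      simp
    have hquad : μ ^ 2 - S * μ + D = 0 := by
      rw [hSdef, hDdef]
      field_simp
      field_simp at he1 he2
      have hG : ((s ⬝ᵥ y) * z) * (μ * (μ * (s ⬝ᵥ y) ^ 2 - s ⬝ᵥ s * (y ⬝ᵥ y + s ⬝ᵥ y * τ)) +
          s ⬝ᵥ s * s ⬝ᵥ y * τ) = 0 := by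
        linear_combination (s ⬝ᵥ s) * he1 +
          (τ * (s ⬝ᵥ y) * (s ⬝ᵥ s) + (y ⬝ᵥ y) * (s ⬝ᵥ s) - μ * (s ⬝ᵥ y) ^ 2) * he2
      have hG' := (mul_eq_zero.mp hG).resolve_left (mul_ne_zero hQ hz)
      linear_combination hG'
    have := hfact μ
    rw [hquad] at this
    rcases mul_eq_zero.mp this with h | h
    · left; linarith [sub_eq_zero.mp h]
    · right; left; linarith [sub_eq_zero.mp h]
  -- determinant via Weinstein–Aronszajn
  have esum : ∀ (c d : ℝ) (u v w : Fin n → ℝ),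
      (∑ k, (c * u k + d * v k) * w k) = c * (u ⬝ᵥ w) + d * (v ⬝ᵥ w) := by
    intro c d u v w
    simp only [dotProduct, Finset.mul_sum, ← Finset.sum_add_distrib]
    exact Finset.sum_congr rfl fun k _ => by ring
  have hdet : Hbar.det = D := by
    classical
    set Cm : Matrix (Fin n) (Fin 2) ℝ := Matrix.of fun i j => ![s i, y i] j with hCm
    set Rm : Matrix (Fin 2) (Fin n) ℝ := Matrix.of fun j k =>
      ![(s ⬝ᵥ y)⁻¹ * (τ + (y ⬝ᵥ y) / (s ⬝ᵥ y)) * s k + (-(s ⬝ᵥ y)⁻¹) * y k,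
        (-(s ⬝ᵥ y)⁻¹) * s k + 0 * y k] j with hRm
    have hH2 : Hbar = 1 + Cm * Rm := by
      rw [hH]
      ext i k
      simp [hCm, hRm, Matrix.mul_apply, Fin.sum_univ_two, vecMulVec_apply,
        Matrix.one_apply, Matrix.add_apply, Matrix.sub_apply, Matrix.smul_apply]
      ring
    rw [hH2, det_one_add_mul_comm, Matrix.det_fin_two]
    have h00 : (Rm * Cm) 0 0 =
        (s ⬝ᵥ y)⁻¹ * (τ + (y ⬝ᵥ y) / (s ⬝ᵥ y)) * (s ⬝ᵥ s) + (-(s ⬝ᵥ y)⁻¹) * (y ⬝ᵥ s) := by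
      rw [Matrix.mul_apply, ← esum]
      exact Finset.sum_congr rfl fun k _ => by simp [hRm, hCm]
    have h01 : (Rm * Cm) 0 1 =
        (s ⬝ᵥ y)⁻¹ * (τ + (y ⬝ᵥ y) / (s ⬝ᵥ y)) * (s ⬝ᵥ y) + (-(s ⬝ᵥ y)⁻¹) * (y ⬝ᵥ y) := by
      rw [Matrix.mul_apply, ← esum]
      exact Finset.sum_congr rfl fun k _ => by simp [hRm, hCm]
    have h10 : (Rm * Cm) 1 0 = (-(s ⬝ᵥ y)⁻¹) * (s ⬝ᵥ s) + 0 * (y ⬝ᵥ s) := by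
      rw [Matrix.mul_apply, ← esum]
      exact Finset.sum_congr rfl fun k _ => by simp [hRm, hCm]
    have h11 : (Rm * Cm) 1 1 = (-(s ⬝ᵥ y)⁻¹) * (s ⬝ᵥ y) + 0 * (y ⬝ᵥ y) := by
      rw [Matrix.mul_apply, ← esum]
      exact Finset.sum_congr rfl fun k _ => by simp [hRm, hCm]
    simp only [Matrix.add_apply, Matrix.one_apply_eq, ne_eq,
      Matrix.one_apply_ne (show (0 : Fin 2) ≠ 1 by decide),
      Matrix.one_apply_ne (show (1 : Fin 2) ≠ 0 by decide), h00, h01, h10, h11]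
    rw [hDdef, dotProduct_comm y s]
    field_simp
    ring
  refine ⟨by rw [hdet, hDdef, one_pow, mul_one], lmin, lmax, by rw [hprod, hDdef],
    by rw [hsum, hSdef], hlminS, hlmaxS, hsub⟩
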